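/- Let T be an invertible isometry on a complex Banach space with σ(T) = {1}. Then T = I. -/

import Mathlib

open Filter Topology Complex Set

namespace Complex

noncomputable def abs : AbsoluteValue ℂ ℝ := NormedField.toAbsoluteValue ℂ

@[simp] lemma abs_def (z : ℂ) : abs z = ‖z‖ := rfl

lemma norm_eq_abs (z : ℂ) : ‖z‖ = abs z := rfl

lemma abs_natCast (n : ℕ) : abs (n : ℂ) = n := norm_natCast n

lemma abs_ofReal (r : ℝ) : abs (r : ℂ) = |r| := norm_real r

lemma abs_exp (z : ℂ) : abs (exp z) = Real.exp z.re := norm_exp z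

lemma abs_re_le_abs (z : ℂ) : |z.re| ≤ abs z := abs_re_le_norm z

end Complex

namespace GelfandAux

noncomputable def cbinom (z : ℂ) (k : ℕ) : ℂ :=
  (∏ j ∈ Finset.range k, (z - j)) / (Nat.factorial k)

lemma cbinom_zero (z : ℂ) : cbinom z 0 = 1 := by simp [cbinom]

lemma cbinom_succ (z : ℂ) (k : ℕ) :
    cbinom z (k + 1) = cbinom z k * (z - k) / (k + 1) := by
  simp only [cbinom, Finset.prod_range_succ, Nat.factorial_succ]
  push_cast
  field_simp

lemma cbinom_pascal (z : ℂ) (k : ℕ) :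
    cbinom (z + 1) (k + 1) = cbinom z (k + 1) + cbinom z k := by
  have h1 : cbinom (z + 1) (k + 1) = cbinom z k * (z + 1) / (k + 1) := by
    simp only [cbinom, Nat.factorial_succ]
    rw [Finset.prod_range_succ']
    push_cast
    have : ∀ j ∈ Finset.range k, (z + 1 - (↑j + 1)) = z - j := by intro j _; ring
    rw [Finset.prod_congr rfl this]
    field_simp
    ring
  rw [h1, cbinom_succ]
  have hk : ((k : ℂ) + 1) ≠ 0 := Nat.cast_add_one_ne_zero k
  field_simp
  ring

lemma abs_cbinom_le (z : ℂ) (k : ℕ) :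
    Complex.abs (cbinom z k) ≤ (Complex.abs z + k) ^ k / (Nat.factorial k) := by
  have h1 : Complex.abs (∏ j ∈ Finset.range k, (z - j)) ≤ (Complex.abs z + k) ^ k := by
    rw [map_prod]
    calc ∏ j ∈ Finset.range k, Complex.abs (z - j)
        ≤ ∏ j ∈ Finset.range k, (Complex.abs z + k) := by
          apply Finset.prod_le_prod (fun _ _ => AbsoluteValue.nonneg _ _)
          intro j hj
          calc Complex.abs (z - j) ≤ Complex.abs z + Complex.abs (j : ℂ) :=
                (AbsoluteValue.sub_le_add _ _ _)
            _ ≤ Complex.abs z + k := by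
                simp only [Complex.abs_natCast]
                have := (Finset.mem_range.1 hj).le
                push_cast
                linarith [(Nat.cast_le (α := ℝ)).2 this]
      _ = (Complex.abs z + k) ^ k := by rw [Finset.prod_const, Finset.card_range]
  rw [cbinom, map_div₀]
  apply div_le_div_of_nonneg_right h1 ?_ |>.trans
  · apply le_of_eq; congr 1; simp [Complex.abs_natCast]
  · positivity

lemma abs_cbinom_real_le_one {s : ℝ} (hs0 : 0 ≤ s) (hs1 : s ≤ 1) (k : ℕ) :
    Complex.abs (cbinom (s : ℂ) k) ≤ 1 := by
  have key : ∀ k : ℕ, Complex.abs (∏ j ∈ Finset.range k, ((s : ℂ) - j)) ≤ Nat.factorial k := by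
    intro k
    induction k with
    | zero => simp
    | succ n ih =>
      rw [Finset.prod_range_succ, map_mul]
      have h2 : Complex.abs ((s : ℂ) - n) ≤ n + 1 := by
        rw [show ((s : ℂ) - n) = ((s - n : ℝ) : ℂ) by push_cast; ring, Complex.abs_ofReal]
        rw [abs_le]
        constructor <;> [linarith; linarith [Nat.cast_nonneg (α := ℝ) n]]
      calc Complex.abs (∏ j ∈ Finset.range n, ((s:ℂ) - j)) * Complex.abs ((s:ℂ) - n)
          ≤ (Nat.factorial n) * (n + 1) := by
            apply mul_le_mul ih h2 (AbsoluteValue.nonneg _ _) (by positivity)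
        _ = Nat.factorial (n + 1) := by rw [Nat.factorial_succ]; push_cast; ring
  rw [cbinom, map_div₀]
  rw [div_le_one (by simp [Complex.abs_natCast]; positivity)]
  calc Complex.abs (∏ j ∈ Finset.range k, ((s : ℂ) - j)) ≤ Nat.factorial k := key k
    _ = Complex.abs ((Nat.factorial k : ℂ)) := by simp [Complex.abs_natCast]

end GelfandAux

namespace Op

variable {X : Type*} [NormedAddCommGroup X] [NormedSpace ℂ X] [CompleteSpace X]

open GelfandAux

noncomputable def Tow (N : X →L[ℂ] X) (z : ℂ) : X →L[ℂ] X :=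
  ∑' k : ℕ, cbinom z k • N ^ k

variable {N : X →L[ℂ] X}

/-- small-norm hypothesis: quasinilpotency -/
def Small (N : X →L[ℂ] X) : Prop := ∀ δ : ℝ, 0 < δ → ∃ m : ℕ, ∀ k, m ≤ k → ‖N ^ k‖ ≤ δ ^ k

lemma exp_nat_eq_pow (k : ℕ) : Real.exp (k : ℝ) = Real.exp 1 ^ k := by
  rw [← Real.exp_nat_mul]; norm_num

lemma pow_pow_div_fact_le (k : ℕ) : (k:ℝ) ^ k / (Nat.factorial k) ≤ Real.exp 1 ^ k := by
  have h := Real.pow_div_factorial_le_exp (x := (k:ℝ)) (Nat.cast_nonneg k) k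
  rwa [exp_nat_eq_pow] at h

lemma add_pow_div_fact_le (a : ℝ) (ha : 0 ≤ a) (k : ℕ) :
    (a + k) ^ k / (Nat.factorial k) ≤ (2:ℝ)^k * a^k / Nat.factorial k + (2 * Real.exp 1)^k := by
  have hf : (0:ℝ) < Nat.factorial k := by exact_mod_cast Nat.factorial_pos k
  have h1 : (a + k) ^ k ≤ 2^k * a^k + 2^k * k^k := by
    calc (a + k)^k ≤ (2 * max a k)^k := by
          apply pow_le_pow_left₀ (by positivity)
          rcases le_total a k with h | h
          · rw [max_eq_right h]; linarith
          · rw [max_eq_left h]; linarith [Nat.cast_nonneg (α := ℝ) k]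
      _ = 2^k * max a k ^ k := mul_pow _ _ _
      _ ≤ 2^k * (a^k + (k:ℝ)^k) := by
          apply mul_le_mul_of_nonneg_left _ (by positivity)
          rcases le_total a (k:ℝ) with h | h
          · rw [max_eq_right h]; nlinarith [pow_nonneg ha k, pow_le_pow_left₀ ha h k]
          · rw [max_eq_left h]
            nlinarith [pow_nonneg (Nat.cast_nonneg (α := ℝ) k) k,
              pow_le_pow_left₀ (Nat.cast_nonneg (α := ℝ) k) h k]
      _ = 2^k * a^k + 2^k * (k:ℝ)^k := by ring
  calc (a + k)^k / Nat.factorial k ≤ (2^k * a^k + 2^k * (k:ℝ)^k) / Nat.factorial k := by gcongr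
    _ = 2^k * a^k / Nat.factorial k + 2^k * ((k:ℝ)^k / Nat.factorial k) := by ring
    _ ≤ 2^k * a^k / Nat.factorial k + 2^k * Real.exp 1 ^ k := by
        gcongr
        exact pow_pow_div_fact_le k
    _ = (2:ℝ)^k * a^k / Nat.factorial k + (2 * Real.exp 1)^k := by rw [mul_pow]

lemma half_bound : 2 * (4 * Real.exp 1)⁻¹ * Real.exp 1 ≤ 2⁻¹ := by
  have h2 : (0:ℝ) < Real.exp 1 := Real.exp_pos 1
  rw [show (2:ℝ) * (4 * Real.exp 1)⁻¹ * Real.exp 1 = 2 * Real.exp 1 / (4 * Real.exp 1) by ring]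
  rw [div_le_iff₀ (by positivity)]
  nlinarith

lemma bound_summable (hN : Small N) {a : ℝ} (ha : 0 ≤ a) :
    Summable (fun k : ℕ => (a + k) ^ k / (Nat.factorial k) * ‖N ^ k‖) := by
  obtain ⟨m, hm⟩ := hN ((4 * Real.exp 1)⁻¹) (by positivity)
  rw [← summable_nat_add_iff m]
  have hδ : (0:ℝ) < (4 * Real.exp 1)⁻¹ := by positivity
  have hmaj : ∀ k : ℕ,
      (a + ((k + m : ℕ) : ℝ)) ^ (k + m) / (Nat.factorial (k + m)) * ‖N ^ (k + m)‖
      ≤ (2 * (4 * Real.exp 1)⁻¹ * a)^(k+m) / Nat.factorial (k+m) + ((2:ℝ)⁻¹)^(k+m) := by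
    intro k
    have hNk := hm (k + m) (Nat.le_add_left m k)
    have hb := add_pow_div_fact_le a ha (k + m)
    have hnn : (0:ℝ) ≤ (a + ((k + m : ℕ):ℝ)) ^ (k + m) / (Nat.factorial (k + m)) := by positivity
    calc (a + ((k+m:ℕ):ℝ)) ^ (k+m) / (Nat.factorial (k+m)) * ‖N ^ (k+m)‖
        ≤ ((2:ℝ)^(k+m) * a^(k+m) / Nat.factorial (k+m) + (2 * Real.exp 1)^(k+m))
            * (4 * Real.exp 1)⁻¹ ^(k+m) := by
          apply mul_le_mul hb hNk (norm_nonneg _) (le_trans hnn hb)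
      _ = (2 * (4 * Real.exp 1)⁻¹ * a)^(k+m) / Nat.factorial (k+m)
            + (2 * (4 * Real.exp 1)⁻¹ * Real.exp 1)^(k+m) := by
          rw [mul_pow (2*(4*Real.exp 1)⁻¹) a, mul_pow (2*(4*Real.exp 1)⁻¹) (Real.exp 1),
            mul_pow 2 ((4*Real.exp 1)⁻¹), mul_pow 2 (Real.exp 1)]
          ring
      _ ≤ (2 * (4 * Real.exp 1)⁻¹ * a)^(k+m) / Nat.factorial (k+m) + ((2:ℝ)⁻¹)^(k+m) := by
          refine add_le_add_right (pow_le_pow_left₀ (by positivity) half_bound _) _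
  apply Summable.of_nonneg_of_le (fun k => by positivity) hmaj
  apply Summable.add
  · exact (summable_nat_add_iff m).2
      (Real.summable_pow_div_factorial (2 * (4 * Real.exp 1)⁻¹ * a))
  · exact (summable_nat_add_iff m).2 (summable_geometric_of_lt_one (by norm_num) (by norm_num))

lemma norm_term_le (z : ℂ) (k : ℕ) :
    ‖cbinom z k • N ^ k‖ ≤ (Complex.abs z + k) ^ k / (Nat.factorial k) * ‖N ^ k‖ := by
  have h := norm_smul (α := ℂ) (β := X →L[ℂ] X) (cbinom z k) (N ^ k)
  rw [Complex.norm_eq_abs] at h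
  rw [h]
  exact mul_le_mul_of_nonneg_right (abs_cbinom_le z k) (norm_nonneg _)

lemma summable_tow (hN : Small N) (z : ℂ) : Summable (fun k : ℕ => cbinom z k • N ^ k) :=
  Summable.of_norm_bounded (bound_summable hN (AbsoluteValue.nonneg _ z)) (norm_term_le z)

lemma summable_tow_shift (hN : Small N) (z : ℂ) :
    Summable (fun k : ℕ => cbinom z k • N ^ (k + 1)) := by
  apply Summable.of_norm_bounded
    (g := fun k => (Complex.abs z + k) ^ k / (Nat.factorial k) * ‖N ^ k‖ * ‖N‖)
  · exact (bound_summable hN (AbsoluteValue.nonneg _ z)).mul_right ‖N‖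
  · intro k
    calc ‖cbinom z k • N ^ (k+1)‖
        ≤ Complex.abs (cbinom z k) * ‖N ^ (k+1)‖ := by
          have h := norm_smul (α := ℂ) (β := X →L[ℂ] X) (cbinom z k) (N ^ (k+1))
          rw [Complex.norm_eq_abs] at h
          exact h.le
      _ ≤ Complex.abs (cbinom z k) * (‖N ^ k‖ * ‖N‖) := by
          apply mul_le_mul_of_nonneg_left _ (AbsoluteValue.nonneg _ _)
          rw [pow_succ]
          exact norm_mul_le _ _
      _ ≤ (Complex.abs z + k) ^ k / (Nat.factorial k) * ‖N ^ k‖ * ‖N‖ := by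
          rw [← mul_assoc]
          apply mul_le_mul_of_nonneg_right _ (norm_nonneg N)
          exact mul_le_mul_of_nonneg_right (abs_cbinom_le z k) (norm_nonneg _)

lemma tow_zero : Tow N 0 = 1 := by
  rw [Tow, tsum_eq_single 0]
  · simp [cbinom_zero]
  · intro k hk
    obtain ⟨n, rfl⟩ := Nat.exists_eq_succ_of_ne_zero hk
    have : cbinom 0 (n+1) = 0 := by
      rw [cbinom]
      rw [Finset.prod_eq_zero (Finset.mem_range.2 (Nat.succ_pos n)) (by simp)]
      simp
    simp [this]

set_option maxHeartbeats 1000000 in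
lemma tow_add_one (hN : Small N) (z : ℂ) : Tow N (z + 1) = (1 + N) * Tow N z := by
  have hg := summable_tow hN z
  have hd := summable_tow_shift hN z
  have hNt : N * Tow N z = ∑' k : ℕ, cbinom z k • N ^ (k + 1) := by
    have h := (ContinuousLinearMap.mul ℂ (X →L[ℂ] X) N).map_tsum hg
    simp only [ContinuousLinearMap.mul_apply'] at h
    rw [Tow, h]
    exact tsum_congr fun k => by rw [mul_smul_comm, ← pow_succ']
  have key : Tow N (z + 1) = Tow N z + N * Tow N z := by
    rw [Tow, hNt, Tow]
    have h0 : cbinom (z+1) 0 • N ^ 0 = cbinom z 0 • N ^ 0 := by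
      simp [cbinom_zero]
    rw [(summable_tow hN (z+1)).tsum_eq_zero_add, hg.tsum_eq_zero_add]
    have hshift : ∀ k : ℕ, cbinom (z+1) (k+1) • N ^ (k+1)
        = cbinom z (k+1) • N ^ (k+1) + cbinom z k • N ^ (k+1) := by
      intro k
      rw [cbinom_pascal, add_smul]
    calc cbinom (z+1) 0 • N ^ 0 + ∑' k : ℕ, cbinom (z+1) (k+1) • N ^ (k+1)
        = cbinom z 0 • N ^ 0 +
            ∑' k : ℕ, (cbinom z (k+1) • N ^ (k+1) + cbinom z k • N ^ (k+1)) := by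
          rw [h0]
          congr 1
          exact tsum_congr hshift
      _ = cbinom z 0 • N ^ 0 + ((∑' k : ℕ, cbinom z (k+1) • N ^ (k+1))
            + ∑' k : ℕ, cbinom z k • N ^ (k+1)) := by
          congr 1
          exact Summable.tsum_add ((summable_nat_add_iff 1).2 hg) hd
      _ = (cbinom z 0 • N ^ 0 + ∑' k : ℕ, cbinom z (k+1) • N ^ (k+1))
            + ∑' k : ℕ, cbinom z k • N ^ (k+1) := (add_assoc _ _ _).symm
  rw [key, add_mul, one_mul]

lemma tow_nat_shift (hN : Small N) (z : ℂ) (n : ℕ) :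
    Tow N (z + n) = (1 + N) ^ n * Tow N z := by
  induction n with
  | zero => simp
  | succ m ih =>
    have : z + (m + 1 : ℕ) = (z + m) + 1 := by push_cast; ring
    rw [this, tow_add_one hN, ih, pow_succ', mul_assoc]

lemma summable_norm_pow (hN : Small N) : Summable (fun k : ℕ => ‖N ^ k‖) := by
  obtain ⟨m, hm⟩ := hN 2⁻¹ (by norm_num)
  rw [← summable_nat_add_iff m]
  apply Summable.of_nonneg_of_le (fun k => norm_nonneg _)
    (fun k => hm (k + m) (Nat.le_add_left m k))
  exact (summable_nat_add_iff m).2 (summable_geometric_of_lt_one (by norm_num) (by norm_num))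

lemma summable_norm_tow_terms (hN : Small N) (z : ℂ) :
    Summable (fun k : ℕ => ‖cbinom z k • N ^ k‖) :=
  Summable.of_nonneg_of_le (fun k => norm_nonneg _) (norm_term_le z)
    (bound_summable hN (AbsoluteValue.nonneg _ z))

lemma norm_tow_le_unit (hN : Small N) {s : ℝ} (h0 : 0 ≤ s) (h1 : s ≤ 1) :
    ‖Tow N (s : ℂ)‖ ≤ ∑' k : ℕ, ‖N ^ k‖ := by
  refine le_trans (norm_tsum_le_tsum_norm (summable_norm_tow_terms hN _)) ?_
  apply Summable.tsum_le_tsum _ (summable_norm_tow_terms hN _) (summable_norm_pow hN)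
  intro k
  have h := norm_smul (α := ℂ) (β := X →L[ℂ] X) (cbinom (s:ℂ) k) (N ^ k)
  rw [Complex.norm_eq_abs] at h
  rw [h]
  calc Complex.abs (cbinom (s:ℂ) k) * ‖N ^ k‖ ≤ 1 * ‖N ^ k‖ :=
        mul_le_mul_of_nonneg_right (abs_cbinom_real_le_one h0 h1 k) (norm_nonneg _)
    _ = ‖N ^ k‖ := one_mul _

lemma maj_lemma {δ a : ℝ} (ha : 0 ≤ a) (hδ : 0 ≤ δ) (hδe : 2 * δ * Real.exp 1 ≤ 2⁻¹)
    {k : ℕ} (hNk : ‖N ^ k‖ ≤ δ ^ k) :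
    (a + k) ^ k / (Nat.factorial k) * ‖N ^ k‖
      ≤ (2 * δ * a) ^ k / Nat.factorial k + ((2:ℝ)⁻¹) ^ k := by
  have hb := add_pow_div_fact_le a ha k
  have hnn : (0:ℝ) ≤ (a + k) ^ k / (Nat.factorial k) := by positivity
  calc (a + k) ^ k / (Nat.factorial k) * ‖N ^ k‖
      ≤ ((2:ℝ)^k * a^k / Nat.factorial k + (2 * Real.exp 1)^k) * δ ^ k :=
        mul_le_mul hb hNk (norm_nonneg _) (le_trans hnn hb)
    _ = (2 * δ * a)^k / Nat.factorial k + (2 * δ * Real.exp 1)^k := by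
        rw [mul_pow (2*δ) a, mul_pow (2*δ) (Real.exp 1), mul_pow 2 δ, mul_pow 2 (Real.exp 1)]
        ring
    _ ≤ (2 * δ * a)^k / Nat.factorial k + ((2:ℝ)⁻¹)^k :=
        add_le_add_right (pow_le_pow_left₀ (by positivity) hδe _) _

lemma exp_tsum (x : ℝ) : ∑' k : ℕ, x ^ k / (Nat.factorial k) = Real.exp x := by
  rw [Real.exp_eq_exp_ℝ, NormedSpace.exp_eq_tsum_div]

set_option maxHeartbeats 1600000 in
lemma tow_growth (hN : Small N) {ε : ℝ} (hε : 0 < ε) :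
    ∃ A : ℝ, 0 ≤ A ∧ ∀ z : ℂ, ‖Tow N z‖ ≤ A * Real.exp (ε * Complex.abs z) := by
  set δ : ℝ := min (4 * Real.exp 1)⁻¹ (ε / 2) with hδdef
  have hδ0 : 0 < δ := lt_min (by positivity) (by positivity)
  have hδe : 2 * δ * Real.exp 1 ≤ 2⁻¹ := by
    refine le_trans ?_ half_bound
    have : δ ≤ (4 * Real.exp 1)⁻¹ := min_le_left _ _
    nlinarith [Real.exp_pos 1]
  have h2δ : 2 * δ ≤ ε := by
    have : δ ≤ ε / 2 := min_le_right _ _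
    linarith
  obtain ⟨m₀, hm₀⟩ := hN δ hδ0
  set m : ℕ := max m₀ 1 with hmdef
  have hm1 : 1 ≤ m := le_max_right _ _
  have hm : ∀ k, m ≤ k → ‖N ^ k‖ ≤ δ ^ k := fun k hk => hm₀ k (le_trans (le_max_left _ _) hk)
  -- the head constant
  set C₀ : ℝ := (Nat.factorial m) * (ε⁻¹)^m * Real.exp (ε * m) with hC₀def
  have hC₀ : 0 ≤ C₀ := by positivity
  set A : ℝ := (∑ k ∈ Finset.range m, ‖N ^ k‖) * C₀ + 3 with hAdef
  have hA : 0 ≤ A := by positivity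
  refine ⟨A, hA, fun z => ?_⟩
  set R : ℝ := Complex.abs z with hRdef
  have hR : 0 ≤ R := AbsoluteValue.nonneg _ _
  have hexp1 : (1:ℝ) ≤ Real.exp (ε * R) := Real.one_le_exp (by positivity)
  -- head bound : for k < m
  have hhead : ∀ k, k < m → (R + k) ^ k / (Nat.factorial k) * ‖N ^ k‖
      ≤ ‖N ^ k‖ * C₀ * Real.exp (ε * R) := by
    intro k hk
    have h1 : (R + k) ^ k ≤ (R + m) ^ m := by
      calc (R + k) ^ k ≤ (R + m) ^ k := by
            apply pow_le_pow_left₀ (by positivity)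
            have : (k:ℝ) ≤ m := by exact_mod_cast hk.le
            linarith
        _ ≤ (R + m) ^ m := by
            apply pow_le_pow_right₀ _ hk.le
            have : (1:ℝ) ≤ m := by exact_mod_cast hm1
            linarith
    have h2 : (R + m) ^ m ≤ C₀ * Real.exp (ε * R) := by
      have h3 := Real.pow_div_factorial_le_exp (x := ε * (R + m)) (by positivity) m
      rw [div_le_iff₀ (by positivity : (0:ℝ) < (Nat.factorial m : ℝ))] at h3
      have h4 : (ε * (R + m)) ^ m = ε ^ m * (R + m) ^ m := mul_pow _ _ _
      rw [h4] at h3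
      have h5 : (R + m) ^ m ≤ (ε⁻¹)^m * (Real.exp (ε * (R + m)) * Nat.factorial m) := by
        have hεm : (0:ℝ) < ε ^ m := pow_pos hε m
        rw [inv_pow, inv_mul_eq_div, le_div_iff₀ hεm]
        nlinarith [h3]
      calc (R + m) ^ m ≤ (ε⁻¹)^m * (Real.exp (ε * (R + m)) * Nat.factorial m) := h5
        _ = C₀ * Real.exp (ε * R) := by
            rw [hC₀def, Real.exp_eq_exp_ℝ]
            rw [show ε * (R + m) = ε * m + ε * R by ring]
            rw [← Real.exp_eq_exp_ℝ, Real.exp_add]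
            ring
    have hkf : (1:ℝ) ≤ Nat.factorial k := by exact_mod_cast Nat.one_le_iff_ne_zero.2 (Nat.factorial_ne_zero k)
    calc (R + k) ^ k / (Nat.factorial k) * ‖N ^ k‖
        ≤ (R + k) ^ k * ‖N ^ k‖ := by
          apply mul_le_mul_of_nonneg_right _ (norm_nonneg _)
          rw [div_le_iff₀ (by positivity : (0:ℝ) < (Nat.factorial k : ℝ))]
          nlinarith [pow_nonneg (by positivity : (0:ℝ) ≤ R + k) k]
      _ ≤ (C₀ * Real.exp (ε * R)) * ‖N ^ k‖ :=
          mul_le_mul_of_nonneg_right (h1.trans h2) (norm_nonneg _)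
      _ = ‖N ^ k‖ * C₀ * Real.exp (ε * R) := by ring
  -- tail bound
  have hsummaj := bound_summable hN (a := R) hR
  have htail : ∑' k : ℕ, (R + ((k + m : ℕ):ℝ)) ^ (k + m) / (Nat.factorial (k + m)) * ‖N ^ (k + m)‖
      ≤ Real.exp (ε * R) + 2 := by
    have hg : Summable (fun k : ℕ => (2 * δ * R) ^ k / (Nat.factorial k) + ((2:ℝ)⁻¹) ^ k) :=
      (Real.summable_pow_div_factorial _).add
        (summable_geometric_of_lt_one (by norm_num) (by norm_num))
    have hle : ∀ k : ℕ, (R + ((k + m:ℕ):ℝ)) ^ (k + m) / (Nat.factorial (k + m)) * ‖N ^ (k + m)‖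
        ≤ (2 * δ * R) ^ (k+m) / (Nat.factorial (k+m)) + ((2:ℝ)⁻¹) ^ (k+m) :=
      fun k => maj_lemma hR hδ0.le hδe (hm (k + m) (Nat.le_add_left m k))
    calc ∑' k : ℕ, (R + ((k + m:ℕ):ℝ)) ^ (k + m) / (Nat.factorial (k + m)) * ‖N ^ (k + m)‖
        ≤ ∑' k : ℕ, ((2 * δ * R) ^ (k+m) / (Nat.factorial (k+m)) + ((2:ℝ)⁻¹) ^ (k+m)) := by
          apply Summable.tsum_le_tsum hle ((summable_nat_add_iff m).2 hsummaj)
            ((summable_nat_add_iff m).2 hg)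
      _ ≤ ∑' k : ℕ, ((2 * δ * R) ^ k / (Nat.factorial k) + ((2:ℝ)⁻¹) ^ k) := by
          have heq := (Summable.sum_add_tsum_nat_add (f := fun k : ℕ =>
            (2 * δ * R) ^ k / (Nat.factorial k) + ((2:ℝ)⁻¹) ^ k) m hg).symm
          have hpos : 0 ≤ ∑ k ∈ Finset.range m,
              ((2 * δ * R) ^ k / (Nat.factorial k) + ((2:ℝ)⁻¹) ^ k) := by
            apply Finset.sum_nonneg; intro k _; positivity
          linarith [heq]
      _ = Real.exp (2 * δ * R) + 2 := by
          rw [Summable.tsum_add (Real.summable_pow_div_factorial _)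
            (summable_geometric_of_lt_one (by norm_num) (by norm_num))]
          rw [exp_tsum, tsum_geometric_of_lt_one (by norm_num) (by norm_num)]
          norm_num
      _ ≤ Real.exp (ε * R) + 2 := by
          have : 2 * δ * R ≤ ε * R := mul_le_mul_of_nonneg_right h2δ hR
          linarith [Real.exp_le_exp.2 this]
  -- assemble
  calc ‖Tow N z‖ ≤ ∑' k : ℕ, ‖cbinom z k • N ^ k‖ :=
        norm_tsum_le_tsum_norm (summable_norm_tow_terms hN z)
    _ ≤ ∑' k : ℕ, (R + k) ^ k / (Nat.factorial k) * ‖N ^ k‖ :=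
        Summable.tsum_le_tsum (norm_term_le z) (summable_norm_tow_terms hN z) hsummaj
    _ = (∑ k ∈ Finset.range m, (R + k) ^ k / (Nat.factorial k) * ‖N ^ k‖)
        + ∑' k : ℕ, (R + ((k + m:ℕ):ℝ)) ^ (k + m) / (Nat.factorial (k + m)) * ‖N ^ (k + m)‖ :=
        (Summable.sum_add_tsum_nat_add m hsummaj).symm
    _ ≤ (∑ k ∈ Finset.range m, ‖N ^ k‖ * C₀ * Real.exp (ε * R))
        + (Real.exp (ε * R) + 2) := by
        apply add_le_add _ htail
        apply Finset.sum_le_sum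
        intro k hk
        exact hhead k (Finset.mem_range.1 hk)
    _ = (∑ k ∈ Finset.range m, ‖N ^ k‖) * C₀ * Real.exp (ε * R) + (Real.exp (ε * R) + 2) := by
        rw [← Finset.sum_mul, ← Finset.sum_mul]
    _ ≤ A * Real.exp (ε * R) := by
        rw [hAdef]
        have hsnn : 0 ≤ (∑ k ∈ Finset.range m, ‖N ^ k‖) * C₀ := by
          apply mul_nonneg _ hC₀
          apply Finset.sum_nonneg; intro k _; exact norm_nonneg _
        nlinarith

end Op



namespace Op

open GelfandAux

variable {X : Type*} [NormedAddCommGroup X] [NormedSpace ℂ X] [CompleteSpace X] {N : X →L[ℂ] X}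

lemma cbinom_differentiable (k : ℕ) : Differentiable ℂ (fun z => cbinom z k) := by
  unfold cbinom
  apply Differentiable.div_const
  apply Differentiable.fun_finsetProd
  intro j _
  exact differentiable_id.sub_const _

lemma tow_differentiable (hN : Small N) : Differentiable ℂ (Tow N) := by
  intro z₀
  have hzmem : z₀ ∈ Metric.ball (0:ℂ) (Complex.abs z₀ + 1) := by
    simp [Complex.dist_eq]
  have hd : DifferentiableOn ℂ (fun w => ∑' k : ℕ, cbinom w k • N ^ k)
      (Metric.ball (0:ℂ) (Complex.abs z₀ + 1)) := by
    apply differentiableOn_tsum_of_summable_norm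
      (u := fun k => (Complex.abs z₀ + 1 + k) ^ k / (Nat.factorial k) * ‖N ^ k‖)
      (bound_summable hN (by positivity))
      (fun k => ((cbinom_differentiable k).smul_const (N ^ k)).differentiableOn)
      Metric.isOpen_ball
    intro k w hw
    refine le_trans (norm_term_le w k) ?_
    have hw' : Complex.abs w ≤ Complex.abs z₀ + 1 := by
      rw [Metric.mem_ball, Complex.dist_eq, sub_zero] at hw
      exact hw.le
    have h1 : (Complex.abs w + k) ^ k ≤ (Complex.abs z₀ + 1 + k) ^ k :=
      pow_le_pow_left₀ (by positivity) (by linarith) k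
    apply mul_le_mul_of_nonneg_right _ (norm_nonneg _)
    gcongr
  exact (hd.differentiableAt (Metric.isOpen_ball.mem_nhds hzmem))

lemma iso_pow_norm {T : X →L[ℂ] X} (hiso : ∀ y : X, ‖T y‖ = ‖y‖) :
    ∀ (n : ℕ) (y : X), ‖(T ^ n) y‖ = ‖y‖ := by
  intro n
  induction n with
  | zero => intro y; simp
  | succ m ih =>
    intro y
    rw [pow_succ, ContinuousLinearMap.mul_apply, ih (T y), hiso y]

lemma tow_real_bound (hN : Small N) (hiso : ∀ y : X, ‖(1 + N) y‖ = ‖y‖) (s : ℝ) (x : X) :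
    ‖Tow N (s : ℂ) x‖ ≤ (∑' k : ℕ, ‖N ^ k‖) * ‖x‖ := by
  have hpow := iso_pow_norm hiso
  set u : ℝ := Int.fract s with hudef
  have hu0 : 0 ≤ u := Int.fract_nonneg s
  have hu1 : u ≤ 1 := (Int.fract_lt_one s).le
  have hbase : ‖Tow N (u : ℂ) x‖ ≤ (∑' k : ℕ, ‖N ^ k‖) * ‖x‖ :=
    calc ‖Tow N (u : ℂ) x‖ ≤ ‖Tow N (u : ℂ)‖ * ‖x‖ := ContinuousLinearMap.le_opNorm _ _
      _ ≤ (∑' k : ℕ, ‖N ^ k‖) * ‖x‖ :=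
          mul_le_mul_of_nonneg_right (norm_tow_le_unit hN hu0 hu1) (norm_nonneg x)
  have hs : s = u + (⌊s⌋ : ℝ) := by
    rw [hudef]
    linarith [Int.floor_add_fract s]
  have key : ‖Tow N (s : ℂ) x‖ = ‖Tow N (u : ℂ) x‖ := by
    rcases le_or_gt 0 ⌊s⌋ with hn | hn
    · have h2 : ((⌊s⌋.toNat : ℕ) : ℝ) = (⌊s⌋ : ℝ) := by
        exact_mod_cast congrArg (Int.cast : ℤ → ℝ) (Int.toNat_of_nonneg hn)
      have h3 : s = u + ((⌊s⌋.toNat : ℕ) : ℝ) := by rw [h2]; exact hs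
      have h1 : (s : ℂ) = (u : ℂ) + ((⌊s⌋.toNat : ℕ) : ℂ) := by
        rw [show (s:ℂ) = ((u + ((⌊s⌋.toNat : ℕ) : ℝ) : ℝ) : ℂ) from by rw [← h3]]
        push_cast
        ring
      rw [h1, tow_nat_shift hN, ContinuousLinearMap.mul_apply, hpow]
    · have h2 : (((-⌊s⌋).toNat : ℕ) : ℝ) = -(⌊s⌋ : ℝ) := by
        exact_mod_cast congrArg (Int.cast : ℤ → ℝ)
          (Int.toNat_of_nonneg (by omega : (0:ℤ) ≤ -⌊s⌋))
      have h3 : u = s + (((-⌊s⌋).toNat : ℕ) : ℝ) := by rw [h2]; linarith [hs]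
      have h1 : (u : ℂ) = (s : ℂ) + (((-⌊s⌋).toNat : ℕ) : ℂ) := by
        rw [show (u:ℂ) = ((s + (((-⌊s⌋).toNat : ℕ) : ℝ) : ℝ) : ℂ) from by rw [← h3]]
        push_cast
        ring
      rw [h1, tow_nat_shift hN, ContinuousLinearMap.mul_apply, hpow]
  rw [key]
  exact hbase

end Op

section PL

open PhragmenLindelof Asymptotics Bornology

lemma liouville_with_growth {F : ℂ → ℂ} (hd : Differentiable ℂ F) {C : ℝ}
    (hre : ∀ s : ℝ, Complex.abs (F (s : ℂ)) ≤ C)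
    (hgrow : ∀ ε : ℝ, 0 < ε → ∃ A : ℝ, 0 ≤ A ∧
      ∀ z : ℂ, Complex.abs (F z) ≤ A * Real.exp (ε * Complex.abs z)) :
    ∀ z : ℂ, F z = F 0 := by
  have half : ∀ σ : ℝ, (σ = 1 ∨ σ = -1) → ∀ ε : ℝ, 0 < ε → ∀ z : ℂ, 0 ≤ σ * z.im →
      Complex.abs (F z) ≤ C * Real.exp (ε * (σ * z.im)) := by
    intro σ hσ ε hε z hz
    obtain ⟨A, hA, hAb⟩ := hgrow ε hε
    have hσabs : Complex.abs ((σ:ℂ)) = 1 := by rcases hσ with h|h <;> simp [h]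
    have hσsq : (σ:ℂ) * (σ:ℂ) = 1 := by
      rcases hσ with h|h <;> (rw [h]; norm_num)
    set g : ℂ → ℂ := fun w => Complex.exp (-(ε:ℂ) * w) * F ((σ:ℂ) * I * w) with hgdef
    have hgdiff : Differentiable ℂ g := by
      apply Differentiable.mul
      · exact (differentiable_id.const_mul _).cexp
      · exact hd.comp (differentiable_id.const_mul _)
    have habs_g : ∀ w : ℂ, Complex.abs (g w)
        = Real.exp (-(ε * w.re)) * Complex.abs (F ((σ:ℂ) * I * w)) := by
      intro w
      rw [hgdef]
      simp only [map_mul, Complex.abs_exp]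
      congr 2
      simp
    have habs_arg : ∀ w : ℂ, Complex.abs ((σ:ℂ) * I * w) = Complex.abs w := by
      intro w
      simp [map_mul, hσabs]
    have hFb : ∀ w : ℂ, Complex.abs (F ((σ:ℂ) * I * w)) ≤ A * Real.exp (ε * Complex.abs w) := by
      intro w
      have := hAb ((σ:ℂ) * I * w)
      rwa [habs_arg] at this
    have hexp_re : ∀ w : ℂ, Real.exp (-(ε * w.re)) ≤ Real.exp (ε * Complex.abs w) := by
      intro w
      apply Real.exp_le_exp.2
      have h2 : |w.re| ≤ Complex.abs w := Complex.abs_re_le_abs w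
      have h3 := abs_le.1 h2
      nlinarith
    have hgexp : ∃ c < (2:ℝ), ∃ B : ℝ,
        g =O[cobounded ℂ ⊓ Filter.principal {w : ℂ | 0 < w.re}]
        fun w => Real.exp (B * Complex.abs w ^ c) := by
      refine ⟨1, one_lt_two, 2 * ε, ?_⟩
      refine IsBigO.of_bound A (Filter.Eventually.of_forall fun w => ?_)
      rw [Complex.norm_eq_abs, habs_g]
      rw [Real.norm_eq_abs, abs_of_pos (Real.exp_pos _), Real.rpow_one]
      calc Real.exp (-(ε * w.re)) * Complex.abs (F ((σ:ℂ) * I * w))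
          ≤ Real.exp (ε * Complex.abs w) * (A * Real.exp (ε * Complex.abs w)) :=
            mul_le_mul (hexp_re w) (hFb w) (AbsoluteValue.nonneg _ _) (Real.exp_pos _).le
        _ = A * Real.exp (2 * ε * Complex.abs w) := by
            rw [show (2:ℝ) * ε * Complex.abs w
              = ε * Complex.abs w + ε * Complex.abs w by ring, Real.exp_add]
            ring
    have hbdd : IsBoundedUnder (· ≤ ·) atTop (fun x : ℝ => ‖g (x : ℂ)‖) := by
      refine ⟨A, ?_⟩
      rw [Filter.eventually_map]
      filter_upwards [Filter.eventually_ge_atTop (0:ℝ)] with x hx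
      rw [Complex.norm_eq_abs, habs_g]
      have h1 : Complex.abs (F ((σ:ℂ) * I * (x:ℂ))) ≤ A * Real.exp (ε * x) := by
        have := hFb (x:ℂ)
        rwa [Complex.abs_ofReal, _root_.abs_of_nonneg hx] at this
      rw [Complex.ofReal_re]
      calc Real.exp (-(ε * x)) * Complex.abs (F ((σ:ℂ) * I * (x:ℂ)))
          ≤ Real.exp (-(ε * x)) * (A * Real.exp (ε * x)) :=
            mul_le_mul_of_nonneg_left h1 (Real.exp_pos _).le
        _ = A * (Real.exp (-(ε * x)) * Real.exp (ε * x)) := by ring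
        _ = A := by rw [← Real.exp_add]; simp
    have him : ∀ x : ℝ, ‖g ((x:ℂ) * I)‖ ≤ C := by
      intro x
      rw [Complex.norm_eq_abs, habs_g]
      have h1 : ((σ:ℂ) * I * ((x:ℂ) * I)) = ((-(σ * x) : ℝ) : ℂ) := by
        have h2 : (σ:ℂ) * I * ((x:ℂ) * I) = (σ:ℂ) * (x:ℂ) * (I * I) := by ring
        rw [h2, Complex.I_mul_I]
        push_cast
        ring
      rw [h1]
      have h2 : ((x:ℂ) * I).re = 0 := by simp
      rw [h2]
      simp only [mul_zero, neg_zero, Real.exp_zero, one_mul]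
      exact hre _
    have hre0 : ((-(σ:ℂ)) * I * z).re = σ * z.im := by
      have h1 : (-(σ:ℂ)) * I * z = ((σ:ℝ):ℂ) * (-(I * z)) := by ring
      rw [h1, Complex.re_ofReal_mul]
      congr 1
      simp [Complex.mul_re]
    have happ := right_half_plane_of_bounded_on_real hgdiff.diffContOnCl hgexp hbdd him
      (z := (-(σ:ℂ)) * I * z) (by rw [hre0]; exact hz)
    have harg : (σ:ℂ) * I * ((-(σ:ℂ)) * I * z) = z := by
      have h1 : (σ:ℂ) * I * ((-(σ:ℂ)) * I * z) = -((σ:ℂ) * (σ:ℂ)) * (I * I) * z := by ring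
      rw [h1, hσsq, Complex.I_mul_I]
      ring
    rw [Complex.norm_eq_abs, habs_g, harg, hre0] at happ
    calc Complex.abs (F z)
        = Real.exp (ε * (σ * z.im)) * (Real.exp (-(ε * (σ * z.im))) * Complex.abs (F z)) := by
          rw [← mul_assoc, ← Real.exp_add]
          simp
      _ ≤ Real.exp (ε * (σ * z.im)) * C :=
          mul_le_mul_of_nonneg_left happ (Real.exp_pos _).le
      _ = C * Real.exp (ε * (σ * z.im)) := mul_comm _ _
  -- step 2 : global bound
  have hCnn : 0 ≤ C := le_trans (AbsoluteValue.nonneg _ _) (hre 0)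
  have hbound : ∀ z : ℂ, Complex.abs (F z) ≤ C := by
    intro z
    have hlim : ∀ b : ℝ, (∀ ε : ℝ, 0 < ε → Complex.abs (F z) ≤ C * Real.exp (ε * b)) →
        Complex.abs (F z) ≤ C := by
      intro b hb
      have hcont : Continuous fun ε : ℝ => C * Real.exp (ε * b) := by
        apply continuous_const.mul
        exact Real.continuous_exp.comp (continuous_id.mul continuous_const)
      have ht : Tendsto (fun ε : ℝ => C * Real.exp (ε * b)) (𝓝[>] 0)
          (𝓝 (C * Real.exp (0 * b))) :=
        (hcont.tendsto 0).mono_left nhdsWithin_le_nhds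
      rw [zero_mul, Real.exp_zero, mul_one] at ht
      refine ge_of_tendsto ht ?_
      filter_upwards [self_mem_nhdsWithin] with ε hε
      exact hb ε hε
    rcases le_or_gt 0 z.im with h | h
    · exact hlim (1 * z.im) (fun ε hε => half 1 (Or.inl rfl) ε hε z (by simpa using h))
    · exact hlim ((-1) * z.im) (fun ε hε => half (-1) (Or.inr rfl) ε hε z (by nlinarith))
  have hb2 : IsBounded (Set.range F) := by
    rw [isBounded_iff_forall_norm_le]
    refine ⟨C, ?_⟩
    rintro y ⟨z, rfl⟩
    rw [Complex.norm_eq_abs]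
    exact hbound z
  exact fun z => hd.apply_eq_apply_of_bounded hb2 z 0

end PL


open Op
open scoped ENNReal NNReal

theorem stmt7 {X : Type*} [NormedAddCommGroup X] [NormedSpace ℂ X] [CompleteSpace X]
    (T : X →L[ℂ] X) (hiso : ∀ x : X, ‖T x‖ = ‖x‖) (hbij : Function.Bijective T)
    (hspec : spectrum ℂ T = {1}) :
    T = 1 := by
  set N : X →L[ℂ] X := T - 1 with hNdef
  have hTN : (1 : X →L[ℂ] X) + N = T := by rw [hNdef]; abel
  have hspecN : spectrum ℂ N = {0} := by
    have h1 : N = T - (algebraMap ℂ (X →L[ℂ] X)) 1 := by rw [map_one, hNdef]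
    rw [h1, ← spectrum.sub_singleton_eq, hspec, Set.singleton_sub_singleton, sub_self]
  have hrad : spectralRadius ℂ N = 0 := by
    rw [spectralRadius, hspecN]
    simp
  have hgel := spectrum.pow_norm_pow_one_div_tendsto_nhds_spectralRadius N
  rw [hrad] at hgel
  have hreal : Tendsto (fun n : ℕ => ‖N ^ n‖ ^ (1 / (n:ℝ))) atTop (𝓝 0) := by
    have h2 := (ENNReal.tendsto_toReal (by norm_num : (0:ℝ≥0∞) ≠ ⊤)).comp hgel
    simp only [Function.comp_def] at h2
    have h3 : ∀ n : ℕ, (ENNReal.ofReal (‖N ^ n‖ ^ (1/(n:ℝ)))).toReal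
        = ‖N ^ n‖ ^ (1/(n:ℝ)) := fun n =>
      ENNReal.toReal_ofReal (Real.rpow_nonneg (norm_nonneg _) _)
    rw [ENNReal.toReal_zero] at h2
    exact h2.congr h3
  have hsmall : Small N := by
    intro δ hδ
    have hev : ∀ᶠ n : ℕ in atTop, ‖N ^ n‖ ^ (1/(n:ℝ)) < δ := hreal.eventually_lt_const hδ
    obtain ⟨m, hm⟩ := eventually_atTop.1 (hev.and (eventually_ge_atTop 1))
    refine ⟨m, fun k hk => ?_⟩
    obtain ⟨h1, h2⟩ := hm k hk
    have hk0 : k ≠ 0 := by omega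
    have h3 : (‖N ^ k‖ ^ (1/(k:ℝ))) ^ k ≤ δ ^ k :=
      pow_le_pow_left₀ (Real.rpow_nonneg (norm_nonneg _) _) h1.le k
    rwa [one_div, Real.rpow_inv_natCast_pow (norm_nonneg _) hk0] at h3
  have hiso' : ∀ y : X, ‖((1 : X →L[ℂ] X) + N) y‖ = ‖y‖ := by
    intro y; rw [hTN]; exact hiso y
  ext x
  refine (NormedSpace.eq_iff_forall_dual_eq ℂ).2 fun φ => ?_
  set L : (X →L[ℂ] X) →L[ℂ] ℂ := φ.comp (ContinuousLinearMap.apply ℂ X x) with hLdef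
  have hLval : ∀ g : X →L[ℂ] X, L g = φ (g x) := fun g => rfl
  have hFd : Differentiable ℂ (fun z => L (Tow N z)) :=
    L.differentiable.comp (tow_differentiable hsmall)
  have hre : ∀ s : ℝ, Complex.abs (L (Tow N (s:ℂ)))
      ≤ ‖φ‖ * ((∑' k : ℕ, ‖N ^ k‖) * ‖x‖) := by
    intro s
    rw [← Complex.norm_eq_abs, hLval]
    calc ‖φ (Tow N (s:ℂ) x)‖ ≤ ‖φ‖ * ‖Tow N (s:ℂ) x‖ := φ.le_opNorm _
      _ ≤ ‖φ‖ * ((∑' k : ℕ, ‖N ^ k‖) * ‖x‖) :=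
          mul_le_mul_of_nonneg_left (tow_real_bound hsmall hiso' s x) (norm_nonneg φ)
  have hgrow : ∀ ε : ℝ, 0 < ε → ∃ A : ℝ, 0 ≤ A ∧ ∀ z : ℂ,
      Complex.abs (L (Tow N z)) ≤ A * Real.exp (ε * Complex.abs z) := by
    intro ε hε
    obtain ⟨A, hA, hAb⟩ := tow_growth hsmall hε
    refine ⟨‖φ‖ * ‖x‖ * A, by positivity, fun z => ?_⟩
    rw [← Complex.norm_eq_abs, hLval]
    calc ‖φ (Tow N z x)‖ ≤ ‖φ‖ * ‖Tow N z x‖ := φ.le_opNorm _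
      _ ≤ ‖φ‖ * (‖Tow N z‖ * ‖x‖) :=
          mul_le_mul_of_nonneg_left (ContinuousLinearMap.le_opNorm _ _) (norm_nonneg φ)
      _ ≤ ‖φ‖ * ((A * Real.exp (ε * Complex.abs z)) * ‖x‖) := by
          apply mul_le_mul_of_nonneg_left _ (norm_nonneg φ)
          exact mul_le_mul_of_nonneg_right (hAb z) (norm_nonneg x)
      _ = ‖φ‖ * ‖x‖ * A * Real.exp (ε * Complex.abs z) := by ring
  have hL := liouville_with_growth hFd hre hgrow 1
  have h1 : Tow N (1:ℂ) = T := by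
    have h2 : (1:ℂ) = 0 + ((1:ℕ):ℂ) := by norm_num
    rw [h2, tow_nat_shift hsmall, tow_zero, pow_one, mul_one, hTN]
  rw [h1, tow_zero] at hL
  have hfin : φ (T x) = φ ((1 : X →L[ℂ] X) x) := hL
  simpa using hfin
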